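/- In the 5-dimensional Lie group example with parameters satisfying λ₁ = λ₃ ≠ 0, μ₁ = -λ₂, μ₃ = -λ₄, the manifold is scalar flat (τ = 0) and isotropic-F₀ (‖∇φ‖² = 0) but is not an F₀-manifold (the tensor F is not identically zero). -/

import Mathlib

open Finset

noncomputable section

/-- The standard basis of ℝ⁵; `e 4` plays the role of ξ. -/
def e (i : Fin 5) : Fin 5 → ℝ := Pi.single i 1

/-- The Reeb vector ξ = e₅. -/
def xi : Fin 5 → ℝ := e 4

/-- The contact form η, dual to ξ. -/
def eta (x : Fin 5 → ℝ) : ℝ := x 4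

/-- The structure endomorphism: φe₁ = e₃, φe₂ = e₄, φe₃ = -e₁, φe₄ = -e₂, φξ = 0. -/
def phi (x : Fin 5 → ℝ) : Fin 5 → ℝ := ![-(x 2), -(x 3), x 0, x 1, 0]

/-- The B-metric g = diag(1,1,-1,-1,1). -/
def gf (x y : Fin 5 → ℝ) : ℝ := x 0 * y 0 + x 1 * y 1 - x 2 * y 2 - x 3 * y 3 + x 4 * y 4

/-- The signs εᵢ = g(eᵢ,eᵢ). -/
def eps : Fin 5 → ℝ := ![1, 1, -1, -1, 1]

/-- The operator x ↦ [x, ξ] on span(e₁,…,e₄), determined by the paper's commutators. -/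
def D (l1 l2 l3 l4 m1 m3 : ℝ) (x : Fin 5 → ℝ) : Fin 5 → ℝ :=
  ![l1 * x 0 + m1 * x 1 - l3 * x 2 - m3 * x 3,
    l2 * x 0 - l1 * x 1 - l4 * x 2 + l3 * x 3,
    l3 * x 0 + m3 * x 1 + l1 * x 2 + m1 * x 3,
    l4 * x 0 - l3 * x 1 + l2 * x 2 - l1 * x 3,
    0]

/-- The Lie bracket: span(e₁,…,e₄) is abelian, [x,ξ] = D x, extended bilinearly and
antisymmetrically. -/
def br (l1 l2 l3 l4 m1 m3 : ℝ) (x y : Fin 5 → ℝ) : Fin 5 → ℝ :=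
  y 4 • D l1 l2 l3 l4 m1 m3 x - x 4 • D l1 l2 l3 l4 m1 m3 y

/-- The Levi-Civita connection via the Koszul formula
2g(∇ₓy, z) = g([x,y],z) + g([z,x],y) + g([z,y],x), recovered componentwise in the
orthogonal basis. -/
def nabla (l1 l2 l3 l4 m1 m3 : ℝ) (x y : Fin 5 → ℝ) : Fin 5 → ℝ :=
  fun i => eps i * ((gf (br l1 l2 l3 l4 m1 m3 x y) (e i)
    + gf (br l1 l2 l3 l4 m1 m3 (e i) x) y
    + gf (br l1 l2 l3 l4 m1 m3 (e i) y) x) / 2)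

/-- The curvature tensor R(x,y)z = ∇ₓ∇_y z - ∇_y∇ₓ z - ∇_{[x,y]} z. -/
def Rc (l1 l2 l3 l4 m1 m3 : ℝ) (x y z : Fin 5 → ℝ) : Fin 5 → ℝ :=
  nabla l1 l2 l3 l4 m1 m3 x (nabla l1 l2 l3 l4 m1 m3 y z)
    - nabla l1 l2 l3 l4 m1 m3 y (nabla l1 l2 l3 l4 m1 m3 x z)
    - nabla l1 l2 l3 l4 m1 m3 (br l1 l2 l3 l4 m1 m3 x y) z

/-- The Ricci tensor ρ(y,z) = Σᵢ εᵢ g(R(eᵢ,y)z, eᵢ). -/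
def rho (l1 l2 l3 l4 m1 m3 : ℝ) (y z : Fin 5 → ℝ) : ℝ :=
  ∑ i : Fin 5, eps i * gf (Rc l1 l2 l3 l4 m1 m3 (e i) y z) (e i)

/-- The scalar curvature τ = Σⱼ εⱼ ρ(eⱼ,eⱼ). -/
def tau (l1 l2 l3 l4 m1 m3 : ℝ) : ℝ :=
  ∑ j : Fin 5, eps j * rho l1 l2 l3 l4 m1 m3 (e j) (e j)

/-- The associated Ricci tensor ρ*(y,z) = Σᵢ εᵢ g(R(eᵢ,y)z, φeᵢ). -/
def rhoStar (l1 l2 l3 l4 m1 m3 : ℝ) (y z : Fin 5 → ℝ) : ℝ :=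
  ∑ i : Fin 5, eps i * gf (Rc l1 l2 l3 l4 m1 m3 (e i) y z) (phi (e i))

/-- The associated scalar curvature τ* = Σⱼ εⱼ ρ*(eⱼ,eⱼ). -/
def tauStar (l1 l2 l3 l4 m1 m3 : ℝ) : ℝ :=
  ∑ j : Fin 5, eps j * rhoStar l1 l2 l3 l4 m1 m3 (e j) (e j)

/-- The fundamental tensor F(x,y,z) = g((∇ₓφ)y, z) = g(∇ₓ(φy) - φ(∇ₓy), z). -/
def Ften (l1 l2 l3 l4 m1 m3 : ℝ) (x y z : Fin 5 → ℝ) : ℝ :=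
  gf (nabla l1 l2 l3 l4 m1 m3 x (phi y) - phi (nabla l1 l2 l3 l4 m1 m3 x y)) z

/-- The square norm ‖∇φ‖² = Σᵢₖ εᵢ εₖ g((∇_{eᵢ}φ)eₖ, (∇_{eᵢ}φ)eₖ). -/
def snPhi (l1 l2 l3 l4 m1 m3 : ℝ) : ℝ :=
  ∑ i : Fin 5, ∑ k : Fin 5, eps i * eps k *
    gf (nabla l1 l2 l3 l4 m1 m3 (e i) (phi (e k)) - phi (nabla l1 l2 l3 l4 m1 m3 (e i) (e k)))
       (nabla l1 l2 l3 l4 m1 m3 (e i) (phi (e k)) - phi (nabla l1 l2 l3 l4 m1 m3 (e i) (e k)))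

lemma e0 : e 0 = ![1,0,0,0,0] := by funext i; fin_cases i <;> simp [e]
lemma e1 : e 1 = ![0,1,0,0,0] := by funext i; fin_cases i <;> simp [e]
lemma e2 : e 2 = ![0,0,1,0,0] := by funext i; fin_cases i <;> simp [e]
lemma e3 : e 3 = ![0,0,0,1,0] := by funext i; fin_cases i <;> simp [e]
lemma e4 : e 4 = ![0,0,0,0,1] := by funext i; fin_cases i <;> simp [e]

def N (l1 l2 l4 : ℝ) (x y : Fin 5 → ℝ) : Fin 5 → ℝ :=
  ![l1*x 0*y 4 - l1*x 2*y 4 + l2*x 4*y 1 - l4*x 4*y 3,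
    -(l1*x 1*y 4) + l1*x 3*y 4 - l2*x 4*y 0 + l4*x 4*y 2,
    l1*x 0*y 4 + l1*x 2*y 4 + l2*x 4*y 3 + l4*x 4*y 1,
    -(l1*x 1*y 4) - l1*x 3*y 4 - l2*x 4*y 2 - l4*x 4*y 0,
    l1*(-(x 0*y 0) + x 1*y 1 + x 2*y 2 - x 3*y 3 + x 0*y 2 + x 2*y 0 - x 1*y 3 - x 3*y 1)]

lemma nabla_eq (l1 l2 l4 : ℝ) (x y : Fin 5 → ℝ) :
    nabla l1 l2 l1 l4 (-l2) (-l4) x y = N l1 l2 l4 x y := by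
  funext i
  fin_cases i <;>
  · simp [nabla, N, br, D, gf, eps, e0, e1, e2, e3, e4]
    ring
lemma Rc_eq (l1 l2 l4 : ℝ) (x y z : Fin 5 → ℝ) :
    Rc l1 l2 l1 l4 (-l2) (-l4) x y z =
      N l1 l2 l4 x (N l1 l2 l4 y z) - N l1 l2 l4 y (N l1 l2 l4 x z)
        - N l1 l2 l4 (br l1 l2 l1 l4 (-l2) (-l4) x y) z := by
  simp only [Rc, nabla_eq]

set_option maxHeartbeats 2000000 in
lemma tau_eq (l1 l2 l4 : ℝ) : tau l1 l2 l1 l4 (-l2) (-l4) = 0 := by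
  simp only [tau, rho, Rc_eq, Fin.sum_univ_five, e0, e1, e2, e3, e4]
  simp [N, br, D, gf, eps]
set_option maxHeartbeats 2000000 in
lemma snPhi_eq (l1 l2 l4 : ℝ) : snPhi l1 l2 l1 l4 (-l2) (-l4) = 0 := by
  simp only [snPhi, nabla_eq, Fin.sum_univ_five, e0, e1, e2, e3, e4]
  simp [N, phi, gf, eps]

lemma Ften_witness (l1 l2 l4 : ℝ) :
    Ften l1 l2 l1 l4 (-l2) (-l4) (e 0) (e 0) (e 4) = l1 := by
  simp only [Ften, nabla_eq, e0, e4]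
  simp [N, phi, gf]

/-- If λ₁ = λ₃ ≠ 0, μ₁ = -λ₂, μ₃ = -λ₄, then the manifold is scalar
flat and isotropic-F₀ but not an F₀-manifold. -/
theorem stmt17 (l1 l2 l3 l4 m1 m3 : ℝ)
    (h13 : l1 = l3) (h0 : l1 ≠ 0) (hm1 : m1 = -l2) (hm3 : m3 = -l4) :
    tau l1 l2 l3 l4 m1 m3 = 0 ∧
    snPhi l1 l2 l3 l4 m1 m3 = 0 ∧
    ¬(∀ x y z : Fin 5 → ℝ, Ften l1 l2 l3 l4 m1 m3 x y z = 0) := by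
  subst h13 hm1 hm3
  refine ⟨tau_eq l1 l2 l4, snPhi_eq l1 l2 l4, fun h => h0 ?_⟩
  have := h (e 0) (e 0) (e 4)
  rw [Ften_witness] at this
  exact this
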